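/- For all natural numbers a, b ≥ 1 with (a,b) ≠ (1,1), gcd(a,b) = (⌊2^(ab(ab+a+b)) / ((2^(a²b) − 1)(2^(ab²) − 1))⌋ mod 2^(ab)) − 1. -/

import Mathlib

open Finset

private lemma pow_ge_add_five (n : ℕ) (h : 3 ≤ n) : n + 5 ≤ 2 ^ n := by
  induction n with
  | zero => omega
  | succ m ih =>
    rcases Nat.lt_or_ge m 3 with hm | hm
    · interval_cases m <;> simp_all <;> omega
    · have h1 := ih hm
      have h2 : 1 ≤ 2 ^ m := Nat.one_le_two_pow
      rw [pow_succ]; omega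

private lemma count_aux (a b : ℕ) (ha : 1 ≤ a) (hb : 1 ≤ b) :
    ((Finset.range (b+1)).filter (fun s => (a*b - s*a) % b = 0)).card = Nat.gcd a b + 1 := by
  set g := Nat.gcd a b with hg
  have hg0 : 0 < g := Nat.gcd_pos_of_pos_left b ha
  set b' := b / g with hb'
  have hb'g : b' * g = b := Nat.div_mul_cancel (Nat.gcd_dvd_right a b)
  have hb'0 : 0 < b' := by
    rcases Nat.eq_zero_or_pos b' with h | h
    · rw [h, zero_mul] at hb'g; omega
    · exact h
  have hcond : ∀ s ∈ Finset.range (b+1),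
      ((a*b - s*a) % b = 0 ↔ b' ∣ s) := by
    intro s hs
    have hsb : s ≤ b := by simpa using Nat.lt_succ_iff.mp (Finset.mem_range.mp hs)
    have hsa : s * a ≤ a * b := by
      calc s * a ≤ b * a := Nat.mul_le_mul_right a hsb
        _ = a * b := Nat.mul_comm b a
    have hdvd : (a*b - s*a) % b = 0 ↔ b ∣ s * a := by
      rw [← Nat.dvd_iff_mod_eq_zero]
      constructor
      · intro h
        have := Nat.dvd_sub (dvd_mul_left b a) h
        rwa [Nat.sub_sub_self hsa] at this
      · intro h
        exact Nat.dvd_sub (dvd_mul_left b a) h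
    rw [hdvd]
    set a' := a / g with ha'
    have ha'g : a' * g = a := Nat.div_mul_cancel (Nat.gcd_dvd_left a b)
    have hco : Nat.Coprime a' b' := Nat.coprime_div_gcd_div_gcd hg0
    constructor
    · intro h
      have h2 : b' * g ∣ s * (a' * g) := by rw [hb'g, ha'g]; exact h
      have h2' : b' * g ∣ (s * a') * g := by
        rw [mul_assoc]; exact h2
      have h3 : b' ∣ s * a' := (Nat.mul_dvd_mul_iff_right hg0).mp h2'
      exact (Nat.Coprime.dvd_of_dvd_mul_right hco.symm h3)
    · rintro ⟨k, rfl⟩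
      rw [← hb'g, ← ha'g]
      exact ⟨k * a', by ring⟩
  rw [Finset.filter_congr hcond]
  have himg : (Finset.range (b+1)).filter (fun s => b' ∣ s)
      = Finset.image (fun u => b' * u) (Finset.range (g+1)) := by
    ext s
    simp only [Finset.mem_filter, Finset.mem_range, Finset.mem_image]
    constructor
    · rintro ⟨hs, k, rfl⟩
      refine ⟨k, ?_, rfl⟩
      by_contra hk
      push_neg at hk
      have : b' * (g + 1) ≤ b' * k := Nat.mul_le_mul_left b' hk
      have : b' * g + b' ≤ b' * k := by rw [Nat.mul_succ] at this; omega
      omega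
    · rintro ⟨u, hu, rfl⟩
      refine ⟨?_, Dvd.intro u rfl⟩
      have : b' * u ≤ b' * g := Nat.mul_le_mul_left b' (by omega)
      omega
  rw [himg, Finset.card_image_of_injective _ (mul_right_injective₀ hb'0.ne'),
    Finset.card_range]

private lemma helper (a b : ℕ) (ha : 1 ≤ a) (hab : a ≤ b) (hb2 : 2 ≤ b)
    (hB5 : b + 5 ≤ 2 ^ (a*b)) :
    Nat.gcd a b =
      (2 ^ (a * b * (a * b + a + b)) / ((2 ^ (a ^ 2 * b) - 1) * (2 ^ (a * b ^ 2) - 1)))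
          % 2 ^ (a * b) - 1 := by
  have hb : 1 ≤ b := by omega
  set g := Nat.gcd a b with hg
  set B := 2 ^ (a*b) with hBdef
  have hB2 : 2 ≤ B := by omega
  have hB0 : 0 < B := by omega
  -- rewrite the powers of 2 as powers of B
  have e1 : 2 ^ (a * b * (a * b + a + b)) = B ^ (a*b + a + b) := by
    rw [hBdef, ← pow_mul]
  have e2 : 2 ^ (a ^ 2 * b) = B ^ a := by
    rw [hBdef, ← pow_mul]; ring_nf
  have e3 : 2 ^ (a * b ^ 2) = B ^ b := by
    rw [hBdef, ← pow_mul]; ring_nf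
  rw [e1, e2, e3]
  set Q : ℕ := ∑ s ∈ range (b+1),
      B ^ ((a*b - s*a) % b) * ∑ k ∈ range ((a*b - s*a)/b + 1), (B^b)^k with hQ
  set E : ℕ := ∑ s ∈ range (b+1), B ^ ((a*b - s*a) % b) with hE
  have h1a : (1:ℕ) ≤ B ^ a := Nat.one_le_pow _ _ hB0
  have h1b : (1:ℕ) ≤ B ^ b := Nat.one_le_pow _ _ hB0
  -- the exact identity over ℤ
  have key : (B^a - 1) * (B^b - 1) * Q + (B^b + (B^a - 1) * E) = B ^ (a*b + a + b) := by
    have hz : ((B:ℤ)^a - 1) * ((B:ℤ)^b - 1) * (Q:ℤ) + ((B:ℤ)^b + ((B:ℤ)^a - 1) * (E:ℤ))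
        = (B:ℤ) ^ (a*b + a + b) := by
      have hmain : ((B:ℤ)^b - 1) * (Q:ℤ)
          = (∑ s ∈ range (b+1), (B:ℤ)^(a*(b-s)+b)) - (E:ℤ) := by
        rw [hQ, hE]
        push_cast
        rw [Finset.mul_sum, ← Finset.sum_sub_distrib]
        refine Finset.sum_congr rfl fun s hs => ?_
        have hsb : s ≤ b := Nat.lt_succ_iff.mp (Finset.mem_range.mp hs)
        have hsa : s * a ≤ a * b := by
          calc s * a ≤ b * a := Nat.mul_le_mul_right a hsb
            _ = a * b := Nat.mul_comm b a
        have hmd : (a*b - s*a) % b + b * ((a*b - s*a)/b) = a*b - s*a :=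
          Nat.mod_add_div _ _
        have hsub : a*b - s*a = a*(b-s) := by
          rw [Nat.mul_sub]
          congr 1
          rw [Nat.mul_comm s a]
        have hexp : (a*b - s*a) % b + b * ((a*b - s*a)/b + 1) = a*(b-s) + b := by
          rw [Nat.mul_add, Nat.mul_one, ← Nat.add_assoc, hmd, hsub]
        calc ((B:ℤ)^b - 1) * ((B:ℤ) ^ ((a*b - s*a) % b)
              * ∑ k ∈ range ((a*b - s*a)/b + 1), ((B:ℤ)^b)^k)
            = (B:ℤ) ^ ((a*b - s*a) % b)
              * ((∑ k ∈ range ((a*b - s*a)/b + 1), ((B:ℤ)^b)^k) * ((B:ℤ)^b - 1)) := by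
              ring
          _ = (B:ℤ) ^ ((a*b - s*a) % b)
              * (((B:ℤ)^b) ^ ((a*b - s*a)/b + 1) - 1) := by
              rw [geom_sum_mul]
          _ = (B:ℤ)^(a*(b-s)+b) - (B:ℤ) ^ ((a*b - s*a) % b) := by
              rw [← pow_mul, mul_sub, mul_one, ← pow_add, hexp]
      have hrefl : ∑ s ∈ range (b+1), (B:ℤ)^(a*(b-s)+b)
          = ∑ j ∈ range (b+1), (B:ℤ)^(a*j+b) := by
        rw [← Finset.sum_range_reflect]
        refine Finset.sum_congr rfl fun s hs => ?_
        have hsb : s ≤ b := Nat.lt_succ_iff.mp (Finset.mem_range.mp hs)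
        rw [show b - (b + 1 - 1 - s) = s from by omega]
      have hgeom2 : (∑ j ∈ range (b+1), ((B:ℤ)^a)^j) * ((B:ℤ)^a - 1)
          = ((B:ℤ)^a)^(b+1) - 1 := geom_sum_mul _ _
      have hsum2 : ∑ j ∈ range (b+1), (B:ℤ)^(a*j+b)
          = (B:ℤ)^b * ∑ j ∈ range (b+1), ((B:ℤ)^a)^j := by
        rw [Finset.mul_sum]
        refine Finset.sum_congr rfl fun j hj => ?_
        rw [← pow_mul, ← pow_add]
        ring_nf
      have hanbn : ((B:ℤ)^a)^(b+1) * (B:ℤ)^b = (B:ℤ)^(a*b+a+b) := by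
        rw [← pow_mul, ← pow_add]
        ring_nf
      calc ((B:ℤ)^a - 1) * ((B:ℤ)^b - 1) * (Q:ℤ) + ((B:ℤ)^b + ((B:ℤ)^a - 1) * (E:ℤ))
          = ((B:ℤ)^a - 1) * (((B:ℤ)^b - 1) * (Q:ℤ)) + ((B:ℤ)^b + ((B:ℤ)^a - 1) * (E:ℤ)) := by ring
        _ = ((B:ℤ)^a - 1) * ((∑ s ∈ range (b+1), (B:ℤ)^(a*(b-s)+b)) - (E:ℤ))
              + ((B:ℤ)^b + ((B:ℤ)^a - 1) * (E:ℤ)) := by rw [hmain]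
        _ = ((B:ℤ)^a - 1) * ((B:ℤ)^b * ∑ j ∈ range (b+1), ((B:ℤ)^a)^j) + (B:ℤ)^b := by
              rw [hrefl, hsum2]; ring
        _ = (B:ℤ)^b * ((∑ j ∈ range (b+1), ((B:ℤ)^a)^j) * ((B:ℤ)^a - 1)) + (B:ℤ)^b := by
              ring
        _ = (B:ℤ) ^ (a*b + a + b) := by
              rw [hgeom2, ← hanbn]; ring
    have := hz
    zify [h1a, h1b]
    linarith [this]
  -- bound on E
  have hElt : E ≤ (b+1) * B^(b-1) := by
    rw [hE]
    calc ∑ s ∈ range (b+1), B ^ ((a*b - s*a) % b)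
        ≤ ∑ _s ∈ range (b+1), B^(b-1) := by
          refine Finset.sum_le_sum fun s _ => ?_
          refine Nat.pow_le_pow_right hB0 ?_
          have := Nat.mod_lt (a*b - s*a) (show 0 < b by omega)
          omega
      _ = (b+1) * B^(b-1) := by
          rw [Finset.sum_const, Finset.card_range, smul_eq_mul]
  -- remainder bound
  have hRD : B^b + (B^a - 1) * E < (B^a - 1) * (B^b - 1) := by
    have hY1 : 1 ≤ B^(b-1) := Nat.one_le_pow _ _ hB0
    have hBb : B^b = B * B^(b-1) := by
      rw [← pow_succ']
      congr 1
      omega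
    have hXB : B - 1 ≤ B^a - 1 := by
      have : B ≤ B ^ a := by
        calc B = B^1 := (pow_one B).symm
          _ ≤ B^a := Nat.pow_le_pow_right hB0 ha
      omega
    have hXY : B^a - 1 ≤ B * B^(b-1) - 1 := by
      have : B^a ≤ B^b := Nat.pow_le_pow_right hB0 hab
      rw [hBb] at this
      omega
    have hXE : (B^a - 1) * E ≤ (b+1) * ((B^a - 1) * B^(b-1)) := by
      calc (B^a - 1) * E ≤ (B^a - 1) * ((b+1) * B^(b-1)) :=
            Nat.mul_le_mul_left _ hElt
        _ = (b+1) * ((B^a - 1) * B^(b-1)) := by ring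
    have h2 : B * B^(b-1) + (B^a - 1) < 4 * ((B^a - 1) * B^(b-1)) := by
      have hx2 : (2*B) * B^(b-1) ≤ (4*(B^a - 1)) * B^(b-1) :=
        Nat.mul_le_mul_right _ (by omega)
      have he1 : (2*B) * B^(b-1) = 2 * (B * B^(b-1)) := by ring
      have he2 : (4*(B^a - 1)) * B^(b-1) = 4 * ((B^a - 1) * B^(b-1)) := by ring
      have hBY1 : 1 ≤ B * B^(b-1) := by rw [← hBb]; exact h1b
      omega
    have heq1 : (b+5) * ((B^a - 1) * B^(b-1))
        = (b+1) * ((B^a - 1) * B^(b-1)) + 4 * ((B^a - 1) * B^(b-1)) := by ring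
    have h3 : (b+5) * ((B^a - 1) * B^(b-1)) ≤ B * ((B^a - 1) * B^(b-1)) :=
      Nat.mul_le_mul_right _ hB5
    have h4 : (B^a - 1) * (B * B^(b-1)) = B * ((B^a - 1) * B^(b-1)) := by ring
    have hBY1 : 1 ≤ B * B^(b-1) := by rw [← hBb]; exact h1b
    have h5 : (B^a - 1) * (B * B^(b-1) - 1) + (B^a - 1) = (B^a - 1) * (B * B^(b-1)) := by
      calc (B^a - 1) * (B * B^(b-1) - 1) + (B^a - 1)
          = (B^a - 1) * ((B * B^(b-1) - 1) + 1) := by ring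
        _ = (B^a - 1) * (B * B^(b-1)) := by rw [Nat.sub_add_cancel hBY1]
    have hgoal2 : B^b - 1 = B * B^(b-1) - 1 := by rw [hBb]
    rw [hgoal2, hBb]
    omega
  -- the quotient computation
  have hdiv : B^(a*b + a + b) / ((B^a - 1) * (B^b - 1)) = Q := by
    refine Nat.div_eq_of_lt_le ?_ ?_
    · calc Q * ((B^a - 1) * (B^b - 1)) = (B^a - 1) * (B^b - 1) * Q := by ring
        _ ≤ B^(a*b+a+b) := by omega
    · calc B^(a*b+a+b) = (B^a - 1) * (B^b - 1) * Q + (B^b + (B^a - 1) * E) := key.symm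
        _ < (B^a - 1) * (B^b - 1) * Q + (B^a - 1) * (B^b - 1) := by omega
        _ = (Q + 1) * ((B^a - 1) * (B^b - 1)) := by ring
  rw [hdiv]
  -- now Q % B = g + 1
  have hg1B : g + 1 < B := by
    have h1 : g ≤ a := Nat.gcd_le_left b ha
    have h2 : a < a * b := (Nat.lt_mul_iff_one_lt_right (by omega)).mpr (by omega)
    have h3 : a * b < 2 ^ (a*b) := Nat.lt_two_pow_self
    omega
  have hQmod : Q % B = g + 1 := by
    have hcast : (Q : ZMod B) = ((g + 1 : ℕ) : ZMod B) := by
      rw [hQ]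
      push_cast
      have hBz : ((B:ℕ) : ZMod B) = 0 := ZMod.natCast_self B
      rw [hBz]
      have hstep : ∀ s ∈ range (b+1),
          (0:ZMod B) ^ ((a*b - s*a) % b) * ∑ k ∈ range ((a*b - s*a)/b + 1), ((0:ZMod B)^b)^k
          = if (a*b - s*a) % b = 0 then 1 else 0 := by
        intro s _
        have hb0 : (0:ZMod B)^b = 0 := zero_pow (by omega)
        rw [hb0]
        have hsum : ∑ k ∈ range ((a*b - s*a)/b + 1), (0:ZMod B)^k = 1 := by
          simp [zero_pow_eq]
        rw [hsum, mul_one, zero_pow_eq]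
      rw [Finset.sum_congr rfl hstep, Finset.sum_boole, count_aux a b ha hb]
      push_cast
      ring
    have hmodeq : Q ≡ g + 1 [MOD B] := (ZMod.natCast_eq_natCast_iff _ _ _).mp hcast
    calc Q % B = (g+1) % B := hmodeq
      _ = g + 1 := Nat.mod_eq_of_lt hg1B
  rw [hQmod]
  omega

theorem gcd_div_mod_base2 (a b : ℕ) (ha : 1 ≤ a) (hb : 1 ≤ b) (hab : (a, b) ≠ (1, 1)) :
    Nat.gcd a b =
      (2 ^ (a * b * (a * b + a + b)) / ((2 ^ (a ^ 2 * b) - 1) * (2 ^ (a * b ^ 2) - 1)))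
          % 2 ^ (a * b) - 1 := by
  have hsymm : ∀ a b : ℕ, 1 ≤ a → a ≤ b → (a, b) ≠ (1, 1) →
      Nat.gcd a b =
        (2 ^ (a * b * (a * b + a + b)) / ((2 ^ (a ^ 2 * b) - 1) * (2 ^ (a * b ^ 2) - 1)))
            % 2 ^ (a * b) - 1 := by
    intro a b ha hab hne
    have hb2 : 2 ≤ b := by
      rcases Nat.lt_or_ge b 2 with h | h
      · interval_cases b <;> simp_all <;> omega
      · exact h
    by_cases h12 : a = 1 ∧ b = 2
    · obtain ⟨rfl, rfl⟩ := h12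
      norm_num
    · refine helper a b ha hab hb2 ?_
      have hab3 : 3 ≤ a * b := by
        rcases Nat.lt_or_ge a 2 with h | h
        · have ha1 : a = 1 := by omega
          have hb3 : 3 ≤ b := by
            rcases Nat.lt_or_ge b 3 with h' | h'
            · exfalso; exact h12 ⟨ha1, by omega⟩
            · exact h'
          rw [ha1]; omega
        · calc 3 ≤ 2 * 2 := by omega
            _ ≤ a * b := Nat.mul_le_mul h hb2
      have := pow_ge_add_five (a*b) hab3
      have : b ≤ a * b := Nat.le_mul_of_pos_left b ha
      omega
  rcases Nat.le_total a b with h | h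
  · exact hsymm a b ha h hab
  · have hba := hsymm b a hb h (by
      intro hc
      apply hab
      simp only [Prod.mk.injEq] at hc ⊢
      omega)
    rw [Nat.gcd_comm]
    rw [hba]
    have e1 : b * a * (b * a + b + a) = a * b * (a * b + a + b) := by ring
    have e2 : b ^ 2 * a = a * b ^ 2 := by ring
    have e3 : b * a ^ 2 = a ^ 2 * b := by ring
    have e4 : b * a = a * b := by ring
    rw [e1, e2, e3, e4, Nat.mul_comm (2 ^ (a*b^2) - 1)]
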